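/- For all k ≥ 1, in the ring R: G_{k_a} − G_{(k−1)_d} = E_{k_a}, and E_{k_a} = a q^k (E_{(k−1)_b} + G_{(k−2)_d}). -/

import Mathlib

open Finset PowerSeries

namespace Primc

/-- Colours: `0 = a`, `1 = b`, `2 = c`, `3 = d`. -/
abbrev Colour := Fin 4

/-- A coloured part `k_z`: an underlying integer `k` together with its colour `z`. -/
abbrev CPart := ℕ × Colour

/-- The matrix `D` of minimal differences, with rows and columns indexed by the colours
`a, b, c, d` in this order. -/
def Dmat : Colour → Colour → ℕ := ![![2,1,2,2], ![1,0,1,1], ![0,1,0,2], ![0,1,0,2]]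

/-- The position of a coloured part in the total order
`1_a < 1_b < 1_c < 1_d < 2_a < 2_b < 2_c < 2_d < ⋯`. -/
def pos (p : CPart) : ℕ := 4 * p.1 + (p.2 : ℕ)

/-- A Primc partition: a finite sequence of coloured positive integers, non-increasing in the
above total order, in which consecutive parts `λ_i, λ_{i+1}` of colours `x, y` satisfy
`λ_i − λ_{i+1} ≥ D(x,y)`. -/
def IsPrimc (l : List CPart) : Prop :=
  (∀ p ∈ l, 1 ≤ p.1) ∧
  l.Chain' fun p r => pos r ≤ pos p ∧ r.1 + Dmat p.2 r.2 ≤ p.1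

/-- The weight of a coloured partition: the sum of the underlying integers of its parts. -/
def wt (l : List CPart) : ℕ := (l.map Prod.fst).sum

/-- The number of parts of colour `z`. -/
def nc (l : List CPart) (z : Colour) : ℕ := l.countP fun p => p.2 == z

/-- `R₀ = ℤ[a,c,d]`, with `a = X 0`, `c = X 1`, `d = X 2`. -/
abbrev R0 := MvPolynomial (Fin 3) ℤ

/-- `R = ℤ[a,c,d][[q]]`. -/
abbrev R := PowerSeries R0

/-- The variable `q`. -/
noncomputable def qq : R := PowerSeries.X

/-- The variable `a`. -/
noncomputable def av : R0 := MvPolynomial.X 0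

/-- The variable `c`. -/
noncomputable def cv : R0 := MvPolynomial.X 1

/-- The variable `d`. -/
noncomputable def dv : R0 := MvPolynomial.X 2

/-- The monomial `a^{#(a-parts)} c^{#(c-parts)} d^{#(d-parts)}` attached to a coloured
partition. -/
noncomputable def mono (l : List CPart) : R0 := av ^ nc l 0 * cv ^ nc l 2 * dv ^ nc l 3

/-- The infinite product `∏_{j ≥ 0} f j`, defined coefficientwise: the coefficient of `qⁿ` is
the corresponding coefficient of the partial product `∏_{j ≤ n} f j`.  This agrees with the
usual (coefficientwise convergent) infinite product whenever the factor `f j` is `≡ 1`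
modulo `q^{j+1}`, as is the case for all products appearing here. -/
noncomputable def iprod (f : ℕ → R) : R :=
  PowerSeries.mk fun n => PowerSeries.coeff n (∏ j ∈ Finset.range (n + 1), f j)

/-- The largest part of a Primc partition (its parts being written in non-increasing order),
with the convention that the empty partition has largest part `0_b`. -/
def top (l : List CPart) : CPart := l.headD (0, 1)

/-- `G_{k_x} ∈ R`: the sum of `q^{|λ|} a^{#(a-parts)} c^{#(c-parts)} d^{#(d-parts)}` over all
Primc partitions `λ` whose largest part is at most `k_x` in the colour order. -/
noncomputable def G (k : ℕ) (x : Colour) : R :=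
  PowerSeries.mk fun n =>
    ∑ᶠ lam : {l : List CPart // IsPrimc l ∧ wt l = n ∧ pos (top l) ≤ pos (k, x)}, mono lam.1

/-- `E_{k_x} ∈ R`: the sum of `q^{|λ|} a^{#(a-parts)} c^{#(c-parts)} d^{#(d-parts)}` over all
Primc partitions `λ` whose largest part is exactly `k_x` (so `E_{0_b} = 1`, the empty
partition having largest part `0_b` by convention). -/
noncomputable def E (k : ℕ) (x : Colour) : R :=
  PowerSeries.mk fun n =>
    ∑ᶠ lam : {l : List CPart // IsPrimc l ∧ wt l = n ∧ top l = (k, x)}, mono lam.1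

/-- `G_{k_d}` for an integer index `k ∈ ℤ`, with the convention `G_{k_d} = 0` for `k < 0`
(in particular `G_{(−1)_d} = 0`). -/
noncomputable def GdZ (k : ℤ) : R := if 0 ≤ k then G k.toNat 3 else 0

/-! ### Auxiliary lemmas -/

lemma wt_cons (p : CPart) (t : List CPart) : wt (p :: t) = p.1 + wt t := by
  simp [wt]

lemma part_le_wt {l : List CPart} {p : CPart} (hp : p ∈ l) : p.1 ≤ wt l :=
  List.single_le_sum (fun x _ => Nat.zero_le x) _ (List.mem_map_of_mem (f := Prod.fst) hp)

lemma length_le_wt {l : List CPart} (h : ∀ p ∈ l, 1 ≤ p.1) : l.length ≤ wt l := by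
  induction l with
  | nil => simp [wt]
  | cons p t ih =>
    have h1 := h p (List.mem_cons_self)
    have ht := ih fun q hq => h q (List.mem_cons_of_mem _ hq)
    rw [wt_cons, List.length_cons]; omega

lemma S_finite (s : Set (List CPart)) (n : ℕ)
    (hs : ∀ l ∈ s, IsPrimc l ∧ wt l = n) : s.Finite := by
  have hT : {l : List (Fin (n+1) × Colour) | l.length ≤ n}.Finite :=
    List.finite_length_le _ n
  refine Set.Finite.subset (hT.image (List.map fun p => ((p.1 : ℕ), p.2))) ?_
  intro l hl
  obtain ⟨hP, hw⟩ := hs l hl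
  have hle : ∀ p ∈ l, p.1 ≤ n := fun p hp => hw ▸ part_le_wt hp
  refine ⟨l.map fun p => ((⟨min p.1 n, by omega⟩ : Fin (n+1)), p.2), ?_, ?_⟩
  · simpa using hw ▸ length_le_wt hP.1
  · rw [List.map_map]
    conv_rhs => rw [← List.map_id l]
    refine List.map_congr_left fun p hp => ?_
    have := hle p hp
    simp [Function.comp, Nat.min_eq_left this]

lemma pos_inj {p r : CPart} (h : pos p = pos r) : p = r := by
  have hp : (p.2 : ℕ) < 4 := p.2.isLt
  have hr : (r.2 : ℕ) < 4 := r.2.isLt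
  unfold pos at h
  exact Prod.ext (by omega) (Fin.ext (by omega))

noncomputable def msum (s : Set (List CPart)) : R0 := ∑ᶠ l ∈ s, mono l

lemma coeff_G (k n : ℕ) (x : Colour) :
    PowerSeries.coeff n (G k x)
      = msum {l | IsPrimc l ∧ wt l = n ∧ pos (top l) ≤ pos (k, x)} := by
  rw [G, coeff_mk, msum]
  exact finsum_set_coe_eq_finsum_mem _

lemma coeff_E (k n : ℕ) (x : Colour) :
    PowerSeries.coeff n (E k x)
      = msum {l | IsPrimc l ∧ wt l = n ∧ top l = (k, x)} := by
  rw [E, coeff_mk, msum]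
  exact finsum_set_coe_eq_finsum_mem _

lemma msum_union {s t : Set (List CPart)} (h : Disjoint s t) (hs : s.Finite) (ht : t.Finite) :
    msum (s ∪ t) = msum s + msum t := finsum_mem_union h hs ht

lemma msum_empty : msum (∅ : Set (List CPart)) = 0 := finsum_mem_empty

lemma mono_cons (kk : ℕ) (t : List CPart) :
    mono (((kk, (0 : Colour)) : CPart) :: t) = av * mono t := by
  have h0 : nc (((kk, (0:Colour)) : CPart) :: t) 0 = nc t 0 + 1 := by
    simp [nc, List.countP_cons]
  have h2 : nc (((kk, (0:Colour)) : CPart) :: t) 2 = nc t 2 := by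
    simp [nc, List.countP_cons]
  have h3 : nc (((kk, (0:Colour)) : CPart) :: t) 3 = nc t 3 := by
    simp [nc, List.countP_cons]
  rw [mono, mono, h0, h2, h3]
  ring

lemma msum_const_mul {s : Set (List CPart)} (hs : s.Finite) (r : R0) :
    ∑ᶠ l ∈ s, r * mono l = r * msum s := by
  rw [msum, finsum_mem_eq_finite_toFinset_sum _ hs,
    finsum_mem_eq_finite_toFinset_sum _ hs, Finset.mul_sum]

lemma head_rel {k : ℕ} (hk : 1 ≤ k) {r : CPart} (h1 : 1 ≤ r.1)
    (h2 : r.1 + Dmat 0 r.2 ≤ k) : r = ((k-1 : ℕ), (1 : Colour)) ∨ pos r + 5 ≤ 4*k := by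
  obtain ⟨rv, rc⟩ := r
  fin_cases rc <;>
    simp [Dmat, pos, Prod.ext_iff, Fin.ext_iff] at h1 h2 ⊢ <;> omega

lemma head_rel' {k : ℕ} (hk : 1 ≤ k) {r : CPart}
    (h : r = ((k-1:ℕ), (1:Colour)) ∨ pos r + 5 ≤ 4*k) :
    pos r ≤ pos ((k : ℕ), (0 : Colour)) ∧ r.1 + Dmat 0 r.2 ≤ k := by
  obtain ⟨rv, rc⟩ := r
  fin_cases rc <;> simp [Dmat, pos, Prod.ext_iff, Fin.ext_iff] at h ⊢ <;> omega

lemma top_cons (p : CPart) (t : List CPart) : top (p :: t) = p := rfl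

lemma top_nil : top ([] : List CPart) = ((0:ℕ), (1:Colour)) := rfl

/-- Equation (2.1d): for all `k ≥ 1`, `G_{k_a} − G_{(k−1)_d} = E_{k_a}` and
`E_{k_a} = a q^k (E_{(k−1)_b} + G_{(k−2)_d})` in `R`. -/
theorem statement11 (k : ℕ) (hk : 1 ≤ k) :
    G k 0 - G (k - 1) 3 = E k 0 ∧
    E k 0 = PowerSeries.C av * qq ^ k * (E (k - 1) 1 + GdZ ((k : ℤ) - 2)) := by
  have e0 : (((0:Colour)) : ℕ) = 0 := rfl
  have e1 : (((1:Colour)) : ℕ) = 1 := rfl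
  have e3 : (((3:Colour)) : ℕ) = 3 := rfl
  constructor
  · have key : G k 0 = E k 0 + G (k-1) 3 := by
      ext n
      rw [map_add, coeff_G, coeff_E, coeff_G]
      have hset : {l | IsPrimc l ∧ wt l = n ∧ pos (top l) ≤ pos ((k:ℕ), (0:Colour))}
          = {l | IsPrimc l ∧ wt l = n ∧ top l = ((k:ℕ), (0:Colour))}
            ∪ {l | IsPrimc l ∧ wt l = n ∧ pos (top l) ≤ pos ((k-1 : ℕ), (3:Colour))} := by
        ext l
        have hlt : (((top l).2 : ℕ)) < 4 := (top l).2.isLt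
        simp only [Set.mem_setOf_eq, Set.mem_union]
        constructor
        · rintro ⟨h1, h2, h3⟩
          by_cases h : pos (top l) = pos ((k:ℕ), (0:Colour))
          · exact Or.inl ⟨h1, h2, pos_inj h⟩
          · refine Or.inr ⟨h1, h2, ?_⟩
            unfold pos at h h3 ⊢
            simp only [e0, e3] at h h3 ⊢
            omega
        · rintro (⟨h1, h2, h3⟩ | ⟨h1, h2, h3⟩)
          · exact ⟨h1, h2, le_of_eq (by rw [h3])⟩
          · refine ⟨h1, h2, ?_⟩
            unfold pos at h3 ⊢
            simp only [e0, e3] at h3 ⊢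
            omega
      have hdisj : Disjoint {l | IsPrimc l ∧ wt l = n ∧ top l = ((k:ℕ), (0:Colour))}
          {l | IsPrimc l ∧ wt l = n ∧ pos (top l) ≤ pos ((k-1 : ℕ), (3:Colour))} := by
        rw [Set.disjoint_left]
        rintro l ⟨_, _, h3⟩ ⟨_, _, h3'⟩
        rw [h3] at h3'
        unfold pos at h3'
        simp only [e0, e3] at h3'
        omega
      rw [hset, msum_union hdisj (S_finite _ n fun l hl => ⟨hl.1, hl.2.1⟩)
        (S_finite _ n fun l hl => ⟨hl.1, hl.2.1⟩)]
    rw [key]; ring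
  · ext n
    rw [coeff_E]
    have hrhs : (PowerSeries.coeff n)
          (PowerSeries.C av * qq ^ k * (E (k - 1) 1 + GdZ ((k : ℤ) - 2)))
        = if k ≤ n then
            av * ((PowerSeries.coeff (n-k)) (E (k-1) 1 + GdZ ((k:ℤ)-2))) else 0 := by
      have hre : PowerSeries.C av * qq ^ k * (E (k - 1) 1 + GdZ ((k : ℤ) - 2))
          = (E (k - 1) 1 + GdZ ((k : ℤ) - 2)) * (PowerSeries.X : R)^k
              * PowerSeries.C av := by
        rw [qq]; ring
      rw [hre, PowerSeries.coeff_mul_C, PowerSeries.coeff_mul_X_pow', ite_mul, zero_mul]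
      by_cases h : k ≤ n <;> simp [h, mul_comm]
    rw [hrhs]
    by_cases hn : k ≤ n
    · rw [if_pos hn]
      -- the two tail sets
      set B1 : Set (List CPart) :=
        {l | IsPrimc l ∧ wt l = n - k ∧ top l = ((k-1:ℕ), (1:Colour))} with hB1
      set B2 : Set (List CPart) :=
        {l | IsPrimc l ∧ wt l = n - k ∧ pos (top l) + 5 ≤ 4*k} with hB2
      have hB1fin : B1.Finite := S_finite _ (n-k) fun l hl => ⟨hl.1, hl.2.1⟩
      have hB2fin : B2.Finite := S_finite _ (n-k) fun l hl => ⟨hl.1, hl.2.1⟩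
      have hE1 : (PowerSeries.coeff (n-k)) (E (k-1) 1) = msum B1 := coeff_E _ _ _
      have hG2 : (PowerSeries.coeff (n-k)) (GdZ ((k:ℤ)-2)) = msum B2 := by
        by_cases h2 : 2 ≤ k
        · have h0 : (0:ℤ) ≤ (k:ℤ)-2 := by omega
          have ht2 : ((k:ℤ)-2).toNat = k - 2 := by omega
          rw [GdZ, if_pos h0, ht2, coeff_G]
          congr 1
          ext l
          have hlt : (((top l).2 : ℕ)) < 4 := (top l).2.isLt
          simp only [Set.mem_setOf_eq, hB2]
          constructor
          · rintro ⟨h1', h2', h3'⟩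
            refine ⟨h1', h2', ?_⟩
            unfold pos at h3' ⊢
            simp only [e3] at h3'
            omega
          · rintro ⟨h1', h2', h3'⟩
            refine ⟨h1', h2', ?_⟩
            unfold pos at h3' ⊢
            simp only [e3]
            omega
        · have h0 : ¬ (0:ℤ) ≤ (k:ℤ)-2 := by omega
          rw [GdZ, if_neg h0, map_zero]
          have hB2e : B2 = (∅ : Set (List CPart)) := by
            ext l
            simp only [Set.mem_setOf_eq, Set.mem_empty_iff_false, iff_false, hB2, not_and]
            intro _ _
            omega
          rw [hB2e, msum_empty]
      rw [map_add, hE1, hG2]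
      -- the bijection
      have hA : {l | IsPrimc l ∧ wt l = n ∧ top l = ((k:ℕ),(0:Colour))}
          = (List.cons (((k:ℕ),(0:Colour)) : CPart)) '' (B1 ∪ B2) := by
        ext l
        simp only [Set.mem_setOf_eq, Set.mem_image, Set.mem_union, hB1, hB2]
        constructor
        · rintro ⟨⟨hps, hch⟩, hw, htop⟩
          cases l with
          | nil =>
            exfalso
            have h0 : (0:ℕ) = k := by simpa [top] using congrArg Prod.fst htop
            omega
          | cons p t =>
            rw [top_cons] at htop
            subst htop
            refine ⟨t, ?_, rfl⟩
            have hPt : IsPrimc t :=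
              ⟨fun q hq => hps q (List.mem_cons_of_mem _ hq), (List.isChain_cons.mp hch).2⟩
            have hwt : wt t = n - k := by rw [wt_cons] at hw; omega
            cases t with
            | nil =>
              by_cases hk1 : k = 1
              · exact Or.inl ⟨hPt, hwt, by rw [top_nil, hk1]⟩
              · refine Or.inr ⟨hPt, hwt, ?_⟩
                rw [top_nil]
                unfold pos
                simp only [e1]
                omega
            | cons r t' =>
              have hrel := (List.isChain_cons_cons.mp hch).1
              have h1 : 1 ≤ r.1 := hps r (List.mem_cons_of_mem _ (List.mem_cons_self))
              rcases head_rel hk h1 hrel.2 with h | h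
              · exact Or.inl ⟨hPt, hwt, by rw [top_cons, h]⟩
              · exact Or.inr ⟨hPt, hwt, by rw [top_cons]; exact h⟩
        · rintro ⟨t, ht, rfl⟩
          have hPt : IsPrimc t := by rcases ht with ⟨h,_,_⟩ | ⟨h,_,_⟩ <;> exact h
          have hwt : wt t = n - k := by rcases ht with ⟨_,h,_⟩ | ⟨_,h,_⟩ <;> exact h
          refine ⟨⟨?_, ?_⟩, ?_, rfl⟩
          · intro q hq
            rcases List.mem_cons.mp hq with rfl | hq'
            · exact hk
            · exact hPt.1 q hq'
          · refine List.isChain_cons.mpr ⟨?_, hPt.2⟩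
            intro b hb
            cases t with
            | nil => simp at hb
            | cons r t' =>
              rw [List.head?_cons, Option.mem_some_iff] at hb
              subst hb
              apply head_rel' hk
              rcases ht with ⟨_,_,h⟩ | ⟨_,_,h⟩
              · exact Or.inl (by rw [top_cons] at h; exact h)
              · exact Or.inr (by rw [top_cons] at h; exact h)
          · rw [wt_cons, hwt]; omega
      have hinj : Set.InjOn (List.cons (((k:ℕ),(0:Colour)) : CPart)) (B1 ∪ B2) :=
        fun x _ y _ h => by injection h
      have hdisj : Disjoint B1 B2 := by
        rw [Set.disjoint_left]
        rintro l ⟨_, _, h3⟩ ⟨_, _, h3'⟩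
        rw [h3] at h3'
        unfold pos at h3'
        simp only [e1] at h3'
        omega
      rw [hA, msum, finsum_mem_image hinj,
        finsum_mem_congr rfl fun t _ => mono_cons k t,
        msum_const_mul (hB1fin.union hB2fin) av, msum_union hdisj hB1fin hB2fin]
    · rw [if_neg hn]
      have hAe : {l | IsPrimc l ∧ wt l = n ∧ top l = ((k:ℕ),(0:Colour))}
          = (∅ : Set (List CPart)) := by
        ext l
        simp only [Set.mem_setOf_eq, Set.mem_empty_iff_false, iff_false]
        rintro ⟨hP, hw, htop⟩
        cases l with
        | nil =>
          have h0 : (0:ℕ) = k := by simpa [top] using congrArg Prod.fst htop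
          omega
        | cons p t =>
          rw [top_cons] at htop
          subst htop
          rw [wt_cons] at hw
          omega
      rw [hAe, msum_empty]

end Primc
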